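/- On the manifold ℝ_{>0}^5 with coordinates (a,b,c,d,e), define e' = (ac+bd)/e, and write dℓx for dlog x = dx/x. Then the following identity of differential 2-forms holds: dℓa∧dℓb + dℓb∧dℓe + dℓe∧dℓa + dℓc∧dℓd + dℓd∧dℓe + dℓe∧dℓc = dℓa∧dℓe' + dℓe'∧dℓd + dℓd∧dℓa + dℓe'∧dℓb + dℓb∧dℓc + dℓc∧dℓe'. -/

import Mathlib

set_option maxHeartbeats 1000000


/-- The value of the 1-form `d log f` at the point `p`, evaluated on the tangent vector `u`. -/
noncomputable def dlog (f : (Fin 5 → ℝ) → ℝ) (p u : Fin 5 → ℝ) : ℝ :=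
  fderiv ℝ (fun q => Real.log (f q)) p u

/-- The wedge `d log f ∧ d log g` at the point `p`, evaluated on the pair `(u, v)`. -/
noncomputable def wdg (f g : (Fin 5 → ℝ) → ℝ) (p u v : Fin 5 → ℝ) : ℝ :=
  dlog f p u * dlog g p v - dlog f p v * dlog g p u

lemma dlog_coord (i : Fin 5) (p u : Fin 5 → ℝ) (h : p i ≠ 0) :
    dlog (fun q => q i) p u = u i / p i := by
  have h1 : HasFDerivAt (fun q : Fin 5 → ℝ => Real.log (q i))
      ((p i)⁻¹ • ContinuousLinearMap.proj i) p :=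
    (hasFDerivAt_apply i p).log h
  rw [dlog, h1.fderiv]
  simp [div_eq_inv_mul]

lemma dlog_num (p u : Fin 5 → ℝ) (h : p 0 * p 2 + p 1 * p 3 ≠ 0) :
    dlog (fun q => q 0 * q 2 + q 1 * q 3) p u
      = (u 0 * p 2 + p 0 * u 2 + u 1 * p 3 + p 1 * u 3) / (p 0 * p 2 + p 1 * p 3) := by
  have h1 := ((hasFDerivAt_apply (𝕜 := ℝ) (0:Fin 5) p).mul (hasFDerivAt_apply (𝕜 := ℝ) (2:Fin 5) p)).add
      ((hasFDerivAt_apply (𝕜 := ℝ) (1:Fin 5) p).mul (hasFDerivAt_apply (𝕜 := ℝ) (3:Fin 5) p))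
  have h2 : HasFDerivAt (fun q : Fin 5 → ℝ => Real.log (q 0 * q 2 + q 1 * q 3)) _ p := h1.log h
  rw [dlog, h2.fderiv]
  simp [ContinuousLinearMap.add_apply, ContinuousLinearMap.smul_apply, div_eq_inv_mul]
  ring

lemma dlog_eprime (p u : Fin 5 → ℝ) (hp : ∀ i, 0 < p i) :
    dlog (fun q => (q 0 * q 2 + q 1 * q 3) / q 4) p u
      = (u 0 * p 2 + p 0 * u 2 + u 1 * p 3 + p 1 * u 3) / (p 0 * p 2 + p 1 * p 3)
        - u 4 / p 4 := by
  have hN : p 0 * p 2 + p 1 * p 3 ≠ 0 :=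
    ne_of_gt (add_pos (mul_pos (hp 0) (hp 2)) (mul_pos (hp 1) (hp 3)))
  have heq : (fun q : Fin 5 → ℝ => Real.log ((q 0 * q 2 + q 1 * q 3) / q 4))
      =ᶠ[nhds p] fun q => Real.log (q 0 * q 2 + q 1 * q 3) - Real.log (q 4) := by
    have hopen : IsOpen {q : Fin 5 → ℝ | q 0 * q 2 + q 1 * q 3 ≠ 0 ∧ q 4 ≠ 0} := by
      apply IsOpen.inter
      · exact isOpen_ne_fun (by fun_prop) (by fun_prop)
      · exact isOpen_ne_fun (by fun_prop) (by fun_prop)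
    filter_upwards [hopen.mem_nhds ⟨hN, (hp 4).ne'⟩] with q hq
    exact Real.log_div hq.1 hq.2
  have : dlog (fun q => (q 0 * q 2 + q 1 * q 3) / q 4) p u
      = fderiv ℝ (fun q : Fin 5 → ℝ =>
          Real.log (q 0 * q 2 + q 1 * q 3) - Real.log (q 4)) p u := by
    rw [dlog, heq.fderiv_eq]
  rw [this]
  have hdN : DifferentiableAt ℝ (fun q : Fin 5 → ℝ => Real.log (q 0 * q 2 + q 1 * q 3)) p := by
    have h1 := ((hasFDerivAt_apply (𝕜 := ℝ) (0:Fin 5) p).mul (hasFDerivAt_apply (𝕜 := ℝ) (2:Fin 5) p)).add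
        ((hasFDerivAt_apply (𝕜 := ℝ) (1:Fin 5) p).mul (hasFDerivAt_apply (𝕜 := ℝ) (3:Fin 5) p))
    exact (h1.log hN).differentiableAt
  have hdE : DifferentiableAt ℝ (fun q : Fin 5 → ℝ => Real.log (q 4)) p :=
    ((hasFDerivAt_apply (4:Fin 5) p).log (hp 4).ne').differentiableAt
  rw [fderiv_fun_sub hdN hdE]
  have e1 := dlog_num p u hN
  have e2 := dlog_coord 4 p u (hp 4).ne'
  rw [dlog] at e1 e2
  simp only [ContinuousLinearMap.sub_apply]
  rw [e1, e2]

theorem penner_form_flip_invariance (p : Fin 5 → ℝ) (hp : ∀ i, 0 < p i)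
    (u v : Fin 5 → ℝ) :
    let a : (Fin 5 → ℝ) → ℝ := fun q => q 0
    let b : (Fin 5 → ℝ) → ℝ := fun q => q 1
    let c : (Fin 5 → ℝ) → ℝ := fun q => q 2
    let d : (Fin 5 → ℝ) → ℝ := fun q => q 3
    let e : (Fin 5 → ℝ) → ℝ := fun q => q 4
    let e' : (Fin 5 → ℝ) → ℝ := fun q => (q 0 * q 2 + q 1 * q 3) / q 4
    wdg a b p u v + wdg b e p u v + wdg e a p u v
      + wdg c d p u v + wdg d e p u v + wdg e c p u v
    = wdg a e' p u v + wdg e' d p u v + wdg d a p u v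
      + wdg e' b p u v + wdg b c p u v + wdg c e' p u v := by
  intro a b c d e e'
  have hN : p 0 * p 2 + p 1 * p 3 ≠ 0 :=
    ne_of_gt (add_pos (mul_pos (hp 0) (hp 2)) (mul_pos (hp 1) (hp 3)))
  simp only [wdg, a, b, c, d, e, e',
    dlog_coord 0 p u (hp 0).ne', dlog_coord 1 p u (hp 1).ne',
    dlog_coord 2 p u (hp 2).ne', dlog_coord 3 p u (hp 3).ne',
    dlog_coord 4 p u (hp 4).ne',
    dlog_coord 0 p v (hp 0).ne', dlog_coord 1 p v (hp 1).ne',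
    dlog_coord 2 p v (hp 2).ne', dlog_coord 3 p v (hp 3).ne',
    dlog_coord 4 p v (hp 4).ne',
    dlog_eprime p u hp, dlog_eprime p v hp]
  have h0 := (hp 0).ne'
  have h1 := (hp 1).ne'
  have h2 := (hp 2).ne'
  have h3 := (hp 3).ne'
  have h4 := (hp 4).ne'
  field_simp
  ring
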